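/- For any estimator θ̂_n on a discrete Bayesian estimation problem, the excess expected message length I₂(θ̂_n) = H(θ̂_n(x_{1:n})) + Σ_{x_{1:n}} P(x_{1:n}=x_{1:n}) log[P(x_{1:n}=x_{1:n}) / P_{θ̂_n(x_{1:n})}^{(1:n)}(x_{1:n})] satisfies I₂(θ̂_n) ≥ 0, with equality if and only if for every θ with P(θ̂_n = θ) > 0 and every x_{1:n} with θ̂_n(x_{1:n}) = θ, it holds that P(x_{1:n} = x_{1:n} | θ̂_n = θ) = P_θ^{(1:n)}(x_{1:n}). -/

import Mathlib

open MeasureTheory ProbabilityTheory Set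
open scoped ENNReal

private lemma myOfReal_max (t : ℝ) : ENNReal.ofReal t = ENNReal.ofReal (max t 0) := by
  rcases le_total t 0 with h | h
  · rw [max_eq_right h, ENNReal.ofReal_eq_zero.2 h, ENNReal.ofReal_zero]
  · rw [max_eq_left h]

private lemma myHelperA (u v : ℝ) (hv : 0 ≤ v) :
    ENNReal.ofReal u + ENNReal.ofReal v + ENNReal.ofReal (-(u+v)) =
      ENNReal.ofReal (u+v) + ENNReal.ofReal (-u) := by
  rw [myOfReal_max u, myOfReal_max (-(u+v)), myOfReal_max (u+v), myOfReal_max (-u),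
    ← ENNReal.ofReal_add (le_max_right _ _) hv,
    ← ENNReal.ofReal_add (by positivity) (le_max_right _ _),
    ← ENNReal.ofReal_add (le_max_right _ _) (le_max_right _ _)]
  congr 1
  simp only [max_def]
  split_ifs <;> linarith

private lemma myHelperB (c a f : ℝ) (ha : 0 ≤ a) (hc : 0 ≤ c) (h : 0 ≤ c - a + f) :
    ENNReal.ofReal c + ENNReal.ofReal f =
      ENNReal.ofReal a + ENNReal.ofReal (-f) + ENNReal.ofReal (c - a + f) := by
  rw [myOfReal_max f, myOfReal_max (-f),
    ← ENNReal.ofReal_add hc (le_max_right _ _),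
    ← ENNReal.ofReal_add ha (le_max_right _ _),
    ← ENNReal.ofReal_add (by positivity) h]
  congr 1
  simp only [max_def]
  split_ifs <;> linarith

private lemma myGibbs (a c : ℝ) (ha : 0 ≤ a) (hc : 0 ≤ c) (hac : 0 < a → 0 < c) :
    0 ≤ c - a + a * Real.log (a / c) ∧
    (c - a + a * Real.log (a / c) = 0 → a = c) := by
  rcases eq_or_lt_of_le ha with h0 | h0
  · constructor
    · simp [← h0]; linarith
    · intro h; simp [← h0] at h ⊢; linarith
  · have hc' := hac h0
    have hlog : Real.log (c / a) ≤ c / a - 1 := Real.log_le_sub_one_of_pos (by positivity)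
    have hinv : Real.log (a/c) = - Real.log (c/a) := by
      rw [← Real.log_inv]; congr 1; field_simp
    have hca : a * (c / a) = c := by field_simp
    constructor
    · rw [hinv]
      nlinarith [mul_le_mul_of_nonneg_left hlog (le_of_lt h0)]
    · intro he
      by_contra hne
      have hne1 : c / a ≠ 1 := by
        intro h1
        apply hne
        field_simp at h1
        linarith
      have hstrict : Real.log (c/a) < c/a - 1 := Real.log_lt_sub_one_of_pos (by positivity) hne1
      rw [hinv] at he
      nlinarith [mul_lt_mul_of_pos_left hstrict h0]

/-- The excess expected message length `I₂` of an estimator is nonnegative, with equality iff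
conditioned on each estimate `θ` of positive probability, the data distribution equals `P_θ`.
Here `I₂ = H(θ̂) + Σ_x P(x) log (P(x) / P_{θ̂(x)}(x))`; the mixed-sign data sum is represented
by its positive part `Spos` (with terms where `P(x) > 0 = P_{θ̂(x)}(x)` contributing `⊤`) and
its negative part `Sneg` (assumed finite, i.e. the sum is well defined), so that `I₂ ≥ 0`
reads `Sneg ≤ H + Spos` and `I₂ = 0` reads `H + Spos = Sneg`. -/
theorem excess_expected_message_length_nonneg
    {Θ : Type*} [Countable Θ] [MeasurableSpace Θ] [DiscreteMeasurableSpace Θ]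
    {X : Type*} [Countable X] [MeasurableSpace X] [DiscreteMeasurableSpace X]
    (μ : Measure (Θ × X)) [IsProbabilityMeasure μ]
    (est : X → Θ)
    -- Shannon entropy of the estimate
    (Hpart : ℝ≥0∞)
    (hH : Hpart = ∑' θ : Θ,
        ENNReal.ofReal (Real.negMulLog ((μ {ω : Θ × X | est ω.2 = θ}).toReal)))
    -- positive and negative parts of Σ_x P(x) log(P(x) / P_{θ̂(x)}(x))
    (Spos Sneg : ℝ≥0∞)
    (hSpos : Spos = ∑' x : X,
        if 0 < (μ (Prod.snd ⁻¹' {x})).toReal ∧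
            ((μ[|Prod.fst ⁻¹' {est x}]) (Prod.snd ⁻¹' {x})).toReal = 0
        then (⊤ : ℝ≥0∞)
        else ENNReal.ofReal ((μ (Prod.snd ⁻¹' {x})).toReal *
          Real.log ((μ (Prod.snd ⁻¹' {x})).toReal /
            ((μ[|Prod.fst ⁻¹' {est x}]) (Prod.snd ⁻¹' {x})).toReal)))
    (hSneg : Sneg = ∑' x : X,
        ENNReal.ofReal (-((μ (Prod.snd ⁻¹' {x})).toReal *
          Real.log ((μ (Prod.snd ⁻¹' {x})).toReal /
            ((μ[|Prod.fst ⁻¹' {est x}]) (Prod.snd ⁻¹' {x})).toReal))))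
    -- the sum is well defined
    (hfin : Sneg ≠ ⊤) :
    Sneg ≤ Hpart + Spos ∧
    (Hpart + Spos = Sneg ↔
      ∀ θ : Θ, 0 < μ {ω : Θ × X | est ω.2 = θ} →
        ∀ x : X, est x = θ →
          (μ[|{ω : Θ × X | est ω.2 = θ}]) (Prod.snd ⁻¹' {x}) =
            (μ[|Prod.fst ⁻¹' {θ}]) (Prod.snd ⁻¹' {x})) := by
  classical
  -- measurability
  have m1 : ∀ s : Set X, MeasurableSet (Prod.snd ⁻¹' s : Set (Θ × X)) :=
    fun s => measurable_snd (MeasurableSet.of_discrete)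
  have m2 : ∀ θ : Θ, MeasurableSet (Prod.fst ⁻¹' {θ} : Set (Θ × X)) :=
    fun θ => measurable_fst (MeasurableSet.of_discrete)
  have m3 : ∀ θ : Θ, {ω : Θ × X | est ω.2 = θ} = Prod.snd ⁻¹' (est ⁻¹' {θ}) := fun _ => rfl
  have mset : ∀ θ : Θ, MeasurableSet {ω : Θ × X | est ω.2 = θ} := fun θ => (m3 θ) ▸ m1 _
  -- conditional measures are bounded by 1
  have cond_le_one : ∀ (s t : Set (Θ × X)), MeasurableSet s → (μ[|s]) t ≤ 1 := by
    intro s t hs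
    rw [cond_apply hs]
    calc (μ s)⁻¹ * μ (s ∩ t) ≤ (μ s)⁻¹ * μ s :=
          mul_le_mul_right (measure_mono Set.inter_subset_left) _
      _ ≤ 1 := by
          rcases eq_or_ne (μ s) 0 with h | h
          · simp [h]
          · rw [ENNReal.inv_mul_cancel h (measure_ne_top μ s)]
  have hQle : ∀ x : X, (μ[|Prod.fst ⁻¹' {est x}]) (Prod.snd ⁻¹' {x}) ≤ 1 :=
    fun x => cond_le_one _ _ (m2 (est x))
  have hQfin : ∀ x : X, (μ[|Prod.fst ⁻¹' {est x}]) (Prod.snd ⁻¹' {x}) ≠ ⊤ :=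
    fun x => ((hQle x).trans_lt ENNReal.one_lt_top).ne
  have hPle : ∀ x : X, μ (Prod.snd ⁻¹' {x}) ≤ μ {ω : Θ × X | est ω.2 = est x} := by
    intro x
    apply measure_mono
    intro ω hω
    have : ω.2 = x := hω
    show est ω.2 = est x
    rw [this]
  -- total sums
  have sum_P : ∑' x : X, μ (Prod.snd ⁻¹' {x}) = 1 := by
    have h := tsum_measure_preimage_singleton (μ := μ) (Set.countable_univ (α := X))
      (f := Prod.snd) (fun y _ => m1 {y})
    rw [tsum_univ (fun y => μ (Prod.snd ⁻¹' {y}))] at h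
    rw [h]; simp
  have sum_pm : ∑' θ : Θ, μ {ω : Θ × X | est ω.2 = θ} = 1 := by
    have h := tsum_measure_preimage_singleton (μ := μ) (Set.countable_univ (α := Θ))
      (f := fun ω : Θ × X => est ω.2) (fun y _ => m1 (est ⁻¹' {y}))
    rw [tsum_univ (fun y => μ ((fun ω : Θ × X => est ω.2) ⁻¹' {y}))] at h
    calc ∑' θ : Θ, μ {ω : Θ × X | est ω.2 = θ}
        = ∑' θ : Θ, μ ((fun ω : Θ × X => est ω.2) ⁻¹' {θ}) := rfl
      _ = μ ((fun ω : Θ × X => est ω.2) ⁻¹' Set.univ) := h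
      _ = 1 := by simp
  have fiber_P : ∀ θ' : Θ, ∑' x : (est ⁻¹' {θ'}), μ (Prod.snd ⁻¹' {(x : X)})
      = μ {ω : Θ × X | est ω.2 = θ'} := by
    intro θ'
    rw [tsum_measure_preimage_singleton (μ := μ) (Set.to_countable (est ⁻¹' {θ'}))
      (f := Prod.snd) (fun y _ => m1 {y})]
    rfl
  have fiber_Q : ∀ θ' : Θ,
      ∑' x : (est ⁻¹' {θ'}), (μ[|Prod.fst ⁻¹' {θ'}]) (Prod.snd ⁻¹' {(x : X)}) ≤ 1 := by
    intro θ'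
    rw [tsum_measure_preimage_singleton (μ := μ[|Prod.fst ⁻¹' {θ'}])
      (Set.to_countable (est ⁻¹' {θ'})) (f := Prod.snd) (fun y _ => m1 {y})]
    exact cond_le_one _ _ (m2 θ')
  have tsum_fiber : ∀ F : X → ℝ≥0∞,
      ∑' x : X, F x = ∑' θ' : Θ, ∑' x : (est ⁻¹' {θ'}), F x := by
    intro F
    rw [← (Equiv.sigmaFiberEquiv est).tsum_eq F, ENNReal.tsum_sigma']
    rfl
  -- real-valued abbreviations
  obtain ⟨Pr, hPr⟩ : ∃ Pr : X → ℝ, Pr = fun x => (μ (Prod.snd ⁻¹' {x})).toReal := ⟨_, rfl⟩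
  obtain ⟨pr, hpr⟩ : ∃ pr : Θ → ℝ, pr = fun θ => (μ {ω : Θ × X | est ω.2 = θ}).toReal := ⟨_, rfl⟩
  obtain ⟨Qr, hQr⟩ : ∃ Qr : X → ℝ,
      Qr = fun x => ((μ[|Prod.fst ⁻¹' {est x}]) (Prod.snd ⁻¹' {x})).toReal := ⟨_, rfl⟩
  have hPr0 : ∀ x, 0 ≤ Pr x := by intro x; rw [hPr]; exact ENNReal.toReal_nonneg
  have hpr0 : ∀ θ', 0 ≤ pr θ' := by intro θ'; rw [hpr]; exact ENNReal.toReal_nonneg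
  have hQr0 : ∀ x, 0 ≤ Qr x := by intro x; rw [hQr]; exact ENNReal.toReal_nonneg
  have hpr1 : ∀ θ', pr θ' ≤ 1 := by
    intro θ'
    rw [hpr]
    simpa using ENNReal.toReal_mono ENNReal.one_ne_top (prob_le_one)
  have hPrle : ∀ x, Pr x ≤ pr (est x) := by
    intro x
    rw [hPr, hpr]
    exact ENNReal.toReal_mono (measure_ne_top μ _) (hPle x)
  -- the formula for the conditional measure given the estimator value
  have condL : ∀ x : X, (μ[|{ω : Θ × X | est ω.2 = est x}]) (Prod.snd ⁻¹' {x})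
      = (μ {ω : Θ × X | est ω.2 = est x})⁻¹ * μ (Prod.snd ⁻¹' {x}) := by
    intro x
    rw [cond_apply (mset (est x))]
    have hsub : Prod.snd ⁻¹' {x} ⊆ {ω : Θ × X | est ω.2 = est x} := by
      intro ω hω
      have : ω.2 = x := hω
      show est ω.2 = est x
      rw [this]
    rw [Set.inter_eq_self_of_subset_right hsub]
  by_cases hA : ∃ x : X, 0 < Pr x ∧ Qr x = 0
  · -- degenerate case : Spos = ⊤
    obtain ⟨x₀, hx₀P, hx₀Q⟩ := hA
    have hSposT : Spos = ⊤ := by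
      rw [hSpos]
      refine top_le_iff.mp ?_
      have h := ENNReal.le_tsum (f := fun x : X =>
        if 0 < (μ (Prod.snd ⁻¹' {x})).toReal ∧
            ((μ[|Prod.fst ⁻¹' {est x}]) (Prod.snd ⁻¹' {x})).toReal = 0
        then (⊤ : ℝ≥0∞)
        else ENNReal.ofReal ((μ (Prod.snd ⁻¹' {x})).toReal *
          Real.log ((μ (Prod.snd ⁻¹' {x})).toReal /
            ((μ[|Prod.fst ⁻¹' {est x}]) (Prod.snd ⁻¹' {x})).toReal))) x₀
      rw [if_pos ⟨by rw [hPr] at hx₀P; exact hx₀P, by rw [hQr] at hx₀Q; exact hx₀Q⟩] at h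
      exact h
    have hTop : Hpart + Spos = ⊤ := by rw [hSposT, add_top]
    refine ⟨hTop ▸ le_top, ?_⟩
    rw [hTop]
    constructor
    · intro h; exact absurd h.symm hfin
    · intro hC
      exfalso
      have hP0 : μ (Prod.snd ⁻¹' {x₀}) ≠ 0 := by
        intro h
        rw [hPr] at hx₀P
        simp only [h, ENNReal.toReal_zero, lt_self_iff_false] at hx₀P
      have hpmpos : 0 < μ {ω : Θ × X | est ω.2 = est x₀} :=
        lt_of_lt_of_le (pos_iff_ne_zero.mpr hP0) (hPle x₀)
      have heq := hC (est x₀) hpmpos x₀ rfl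
      rw [condL x₀] at heq
      have hQ0 : (μ[|Prod.fst ⁻¹' {est x₀}]) (Prod.snd ⁻¹' {x₀}) = 0 := by
        rw [hQr] at hx₀Q
        rcases (ENNReal.toReal_eq_zero_iff _).mp hx₀Q with h | h
        · exact h
        · exact absurd h (hQfin x₀)
      rw [hQ0] at heq
      rcases mul_eq_zero.mp heq with h | h
      · exact (ENNReal.inv_ne_zero.mpr (measure_ne_top μ _)) h
      · exact hP0 h
  · -- main case
    push_neg at hA
    have hB : ∀ x : X, 0 < Pr x → Qr x ≠ 0 := hA
    -- more real abbreviations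
    obtain ⟨g, hg⟩ : ∃ g : X → ℝ, g = fun x => Pr x * Real.log (Pr x / Qr x) := ⟨_, rfl⟩
    obtain ⟨v, hv⟩ : ∃ v : X → ℝ, v = fun x => -(Pr x * Real.log (pr (est x))) := ⟨_, rfl⟩
    obtain ⟨f, hf⟩ : ∃ f : X → ℝ,
        f = fun x => Pr x * Real.log (Pr x / (pr (est x) * Qr x)) := ⟨_, rfl⟩
    obtain ⟨d, hd⟩ : ∃ d : X → ℝ, d = fun x => pr (est x) * Qr x - Pr x + f x := ⟨_, rfl⟩
    have hv0 : ∀ x, 0 ≤ v x := by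
      intro x
      rw [hv]
      have hlog : Real.log (pr (est x)) ≤ 0 := Real.log_nonpos (hpr0 _) (hpr1 _)
      simp only [neg_nonneg]
      exact mul_nonpos_of_nonneg_of_nonpos (hPr0 x) hlog
    have hfgv : ∀ x, f x = g x + v x := by
      intro x
      rcases eq_or_lt_of_le (hPr0 x) with h0 | h0
      · simp [hf, hg, hv, ← h0]
      · have hQ : 0 < Qr x := (hQr0 x).lt_of_ne (Ne.symm (hB x h0))
        have hp : 0 < pr (est x) := lt_of_lt_of_le h0 (hPrle x)
        have hlog : Real.log (Pr x / (pr (est x) * Qr x))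
            = Real.log (Pr x / Qr x) - Real.log (pr (est x)) := by
          rw [Real.log_div (ne_of_gt h0) (by positivity),
            Real.log_div (ne_of_gt h0) (ne_of_gt hQ),
            Real.log_mul (ne_of_gt hp) (ne_of_gt hQ)]
          ring
        simp only [hf, hg, hv, hlog]
        ring
    have hgibbs : ∀ x, 0 ≤ d x ∧ (d x = 0 → Pr x = pr (est x) * Qr x) := by
      intro x
      have h := myGibbs (Pr x) (pr (est x) * Qr x) (hPr0 x)
        (mul_nonneg (hpr0 _) (hQr0 x))
        (fun h0 => mul_pos (lt_of_lt_of_le h0 (hPrle x)) ((hQr0 x).lt_of_ne (Ne.symm (hB x h0))))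
      simp only [hd, hf]
      exact h
    -- identification of the sums
    have E3 : Sneg = ∑' x : X, ENNReal.ofReal (-(g x)) := by
      rw [hSneg]; simp only [hg, hPr, hQr]
    have E2 : Spos = ∑' x : X, ENNReal.ofReal (g x) := by
      rw [hSpos]
      apply tsum_congr
      intro x
      rw [if_neg]
      · simp only [hg, hPr, hQr]
      · intro hcon
        exact hB x (by rw [hPr]; exact hcon.1) (by rw [hQr]; exact hcon.2)
    have E1 : Hpart = ∑' x : X, ENNReal.ofReal (v x) := by
      rw [hH, tsum_fiber (fun x => ENNReal.ofReal (v x))]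
      apply tsum_congr
      intro θ'
      have key : ∀ x : (est ⁻¹' {θ'} : Set X), ENNReal.ofReal (v x)
          = μ (Prod.snd ⁻¹' {(x : X)}) * ENNReal.ofReal (-Real.log (pr θ')) := by
        rintro ⟨x, hx⟩
        have hx' : est x = θ' := hx
        simp only [hv, hx']
        rw [show -(Pr x * Real.log (pr θ')) = Pr x * (-Real.log (pr θ')) by ring,
          ENNReal.ofReal_mul (hPr0 x)]
        congr 1
        rw [hPr]
        exact ENNReal.ofReal_toReal (measure_ne_top μ _)
      rw [tsum_congr key, ENNReal.tsum_mul_right, fiber_P θ']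
      conv_rhs => rw [show μ {ω : Θ × X | est ω.2 = θ'} = ENNReal.ofReal (pr θ') from by
        rw [hpr]; exact (ENNReal.ofReal_toReal (measure_ne_top μ _)).symm]
      rw [← ENNReal.ofReal_mul (hpr0 θ')]
      congr 1
      simp only [hpr]
      rw [Real.negMulLog]
      ring
    have E5 : ∑' x : X, ENNReal.ofReal (Pr x) = 1 := by
      rw [show (fun x : X => ENNReal.ofReal (Pr x)) = fun x => μ (Prod.snd ⁻¹' {x}) by
        funext x; rw [hPr]; exact ENNReal.ofReal_toReal (measure_ne_top μ _)]
      exact sum_P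
    have E4 : ∑' x : X, ENNReal.ofReal (pr (est x) * Qr x) ≤ 1 := by
      rw [tsum_fiber (fun x => ENNReal.ofReal (pr (est x) * Qr x))]
      have key : ∀ θ' : Θ, ∑' x : (est ⁻¹' {θ'}), ENNReal.ofReal (pr (est (x : X)) * Qr x)
          = ENNReal.ofReal (pr θ') *
            ∑' x : (est ⁻¹' {θ'}), (μ[|Prod.fst ⁻¹' {θ'}]) (Prod.snd ⁻¹' {(x : X)}) := by
        intro θ'
        rw [← ENNReal.tsum_mul_left]
        apply tsum_congr
        rintro ⟨x, hx⟩
        have hx' : est x = θ' := hx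
        simp only [hx']
        rw [ENNReal.ofReal_mul (hpr0 θ')]
        congr 1
        rw [hQr]
        simp only [hx']
        exact ENNReal.ofReal_toReal (by rw [← hx']; exact hQfin x)
      calc ∑' θ' : Θ, ∑' x : (est ⁻¹' {θ'}), ENNReal.ofReal (pr (est (x : X)) * Qr x)
          = ∑' θ' : Θ, ENNReal.ofReal (pr θ') *
              ∑' x : (est ⁻¹' {θ'}), (μ[|Prod.fst ⁻¹' {θ'}]) (Prod.snd ⁻¹' {(x : X)}) :=
            tsum_congr key
        _ ≤ ∑' θ' : Θ, ENNReal.ofReal (pr θ') * 1 :=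
            ENNReal.tsum_le_tsum (fun θ' => mul_le_mul_right (fiber_Q θ') _)
        _ = ∑' θ' : Θ, μ {ω : Θ × X | est ω.2 = θ'} := by
            apply tsum_congr
            intro θ'
            rw [mul_one, hpr]
            exact ENNReal.ofReal_toReal (measure_ne_top μ _)
        _ = 1 := sum_pm
    -- the two balance equations
    have star : (∑' x : X, ENNReal.ofReal (g x)) + (∑' x : X, ENNReal.ofReal (v x))
        + (∑' x : X, ENNReal.ofReal (-(f x)))
        = (∑' x : X, ENNReal.ofReal (f x)) + (∑' x : X, ENNReal.ofReal (-(g x))) := by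
      rw [← ENNReal.tsum_add, ← ENNReal.tsum_add, ← ENNReal.tsum_add]
      apply tsum_congr
      intro x
      rw [hfgv x]
      exact myHelperA (g x) (v x) (hv0 x)
    have star2 : (∑' x : X, ENNReal.ofReal (pr (est x) * Qr x))
        + (∑' x : X, ENNReal.ofReal (f x))
        = 1 + ((∑' x : X, ENNReal.ofReal (-(f x))) + (∑' x : X, ENNReal.ofReal (d x))) := by
      rw [← E5, ← ENNReal.tsum_add, ← ENNReal.tsum_add, ← ENNReal.tsum_add]
      apply tsum_congr
      intro x
      rw [← add_assoc]
      rw [show d x = pr (est x) * Qr x - Pr x + f x from by rw [hd]]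
      exact myHelperB (pr (est x) * Qr x) (Pr x) (f x) (hPr0 x)
        (mul_nonneg (hpr0 _) (hQr0 x)) (by have := (hgibbs x).1; rwa [hd] at this)
    have hFmB : (∑' x : X, ENNReal.ofReal (-(f x)))
        ≤ ∑' x : X, ENNReal.ofReal (pr (est x) * Qr x) := by
      apply ENNReal.tsum_le_tsum
      intro x
      apply ENNReal.ofReal_le_ofReal
      have h1 := (hgibbs x).1
      simp only [hd] at h1
      have := hPr0 x
      linarith
    have hFmfin : (∑' x : X, ENNReal.ofReal (-(f x))) ≠ ⊤ :=
      ((hFmB.trans E4).trans_lt ENNReal.one_lt_top).ne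
    have h1 : (∑' x : X, ENNReal.ofReal (-(f x))) + (∑' x : X, ENNReal.ofReal (d x))
        ≤ ∑' x : X, ENNReal.ofReal (f x) := by
      have hle : (1 : ℝ≥0∞) + ((∑' x : X, ENNReal.ofReal (-(f x)))
          + (∑' x : X, ENNReal.ofReal (d x))) ≤ 1 + ∑' x : X, ENNReal.ofReal (f x) := by
        rw [← star2]
        exact add_le_add_left E4 _
      exact (ENNReal.add_le_add_iff_left ENNReal.one_ne_top).mp hle
    have hFmFp : (∑' x : X, ENNReal.ofReal (-(f x))) ≤ ∑' x : X, ENNReal.ofReal (f x) :=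
      le_trans le_self_add h1
    have goal1 : Sneg ≤ Hpart + Spos := by
      have h2 : (∑' x : X, ENNReal.ofReal (-(f x))) + Sneg
          ≤ (∑' x : X, ENNReal.ofReal (-(f x))) + (Hpart + Spos) := by
        calc (∑' x : X, ENNReal.ofReal (-(f x))) + Sneg
            ≤ (∑' x : X, ENNReal.ofReal (f x)) + Sneg := add_le_add_left hFmFp _
          _ = Spos + Hpart + (∑' x : X, ENNReal.ofReal (-(f x))) := by
              rw [E2, E1, E3, ← star]
          _ = (∑' x : X, ENNReal.ofReal (-(f x))) + (Hpart + Spos) := by ring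
      exact (ENNReal.add_le_add_iff_left hFmfin).mp h2
    refine ⟨goal1, ?_, ?_⟩
    · -- equality implies the conditional condition
      intro h
      have hFpFm : (∑' x : X, ENNReal.ofReal (f x)) = ∑' x : X, ENNReal.ofReal (-(f x)) := by
        have hcalc : Sneg + (∑' x : X, ENNReal.ofReal (f x))
            = Sneg + ∑' x : X, ENNReal.ofReal (-(f x)) := by
          calc Sneg + (∑' x : X, ENNReal.ofReal (f x))
              = (∑' x : X, ENNReal.ofReal (f x)) + Sneg := add_comm _ _
            _ = Spos + Hpart + (∑' x : X, ENNReal.ofReal (-(f x))) := by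
                rw [E2, E1, E3, ← star]
            _ = (Hpart + Spos) + (∑' x : X, ENNReal.ofReal (-(f x))) := by ring
            _ = Sneg + ∑' x : X, ENNReal.ofReal (-(f x)) := by rw [h]
        exact (ENNReal.add_right_inj hfin).mp hcalc
      have hFpfin : (∑' x : X, ENNReal.ofReal (f x)) ≠ ⊤ := by
        rw [hFpFm]; exact hFmfin
      have hD0 : (∑' x : X, ENNReal.ofReal (d x)) = 0 := by
        have hle : (1 + ∑' x : X, ENNReal.ofReal (f x)) + (∑' x : X, ENNReal.ofReal (d x))
            ≤ (1 + ∑' x : X, ENNReal.ofReal (f x)) + 0 := by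
          rw [add_zero]
          calc (1 + ∑' x : X, ENNReal.ofReal (f x)) + (∑' x : X, ENNReal.ofReal (d x))
              = 1 + ((∑' x : X, ENNReal.ofReal (-(f x))) + (∑' x : X, ENNReal.ofReal (d x))) := by
                rw [hFpFm]; ring
            _ = (∑' x : X, ENNReal.ofReal (pr (est x) * Qr x))
                + (∑' x : X, ENNReal.ofReal (f x)) := star2.symm
            _ ≤ 1 + ∑' x : X, ENNReal.ofReal (f x) := add_le_add_left E4 _
        have hfin1 : (1 + ∑' x : X, ENNReal.ofReal (f x)) ≠ ⊤ := by
          simp [hFpfin]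
        exact le_antisymm ((ENNReal.add_le_add_iff_left hfin1).mp hle) zero_le
      have hd0 : ∀ x, d x = 0 := by
        intro x
        have h0 := (ENNReal.tsum_eq_zero.mp hD0) x
        have hle : d x ≤ 0 := ENNReal.ofReal_eq_zero.mp h0
        exact le_antisymm hle (hgibbs x).1
      intro θ' hθ' x hx
      subst hx
      rw [condL x]
      have hPeq : Pr x = pr (est x) * Qr x := (hgibbs x).2 (hd0 x)
      have hPQ : μ (Prod.snd ⁻¹' {x}) = μ {ω : Θ × X | est ω.2 = est x}
          * (μ[|Prod.fst ⁻¹' {est x}]) (Prod.snd ⁻¹' {x}) := by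
        have h1 : μ (Prod.snd ⁻¹' {x}) = ENNReal.ofReal (Pr x) := by
          rw [hPr]; exact (ENNReal.ofReal_toReal (measure_ne_top μ _)).symm
        rw [h1, hPeq, ENNReal.ofReal_mul (hpr0 _), hpr, hQr,
          ENNReal.ofReal_toReal (measure_ne_top μ _), ENNReal.ofReal_toReal (hQfin x)]
      rw [hPQ, ← mul_assoc, ENNReal.inv_mul_cancel hθ'.ne' (measure_ne_top μ _), one_mul]
    · -- conditional condition implies equality
      intro hC
      have hf0 : ∀ x, f x = 0 := by
        intro x
        by_cases hp : μ {ω : Θ × X | est ω.2 = est x} = 0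
        · have hPx : μ (Prod.snd ⁻¹' {x}) = 0 :=
            le_antisymm (hp ▸ hPle x) zero_le
          have h0 : Pr x = 0 := by rw [hPr]; simp [hPx]
          simp [hf, h0]
        · have hθpos : 0 < μ {ω : Θ × X | est ω.2 = est x} := pos_iff_ne_zero.mpr hp
          have heq := hC (est x) hθpos x rfl
          rw [condL x] at heq
          have hPQ : μ (Prod.snd ⁻¹' {x}) = μ {ω : Θ × X | est ω.2 = est x}
              * (μ[|Prod.fst ⁻¹' {est x}]) (Prod.snd ⁻¹' {x}) := by
            calc μ (Prod.snd ⁻¹' {x})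
                = μ {ω : Θ × X | est ω.2 = est x} * ((μ {ω : Θ × X | est ω.2 = est x})⁻¹
                  * μ (Prod.snd ⁻¹' {x})) := by
                  rw [← mul_assoc, ENNReal.mul_inv_cancel hp (measure_ne_top μ _), one_mul]
              _ = _ := by rw [heq]
          have hPrx : Pr x = pr (est x) * Qr x := by
            simp only [hPr, hpr, hQr]
            rw [hPQ, ENNReal.toReal_mul]
          simp only [hf]
          rw [← hPrx]
          rcases eq_or_ne (Pr x) 0 with h0 | h0
          · rw [h0]; simp
          · rw [div_self h0, Real.log_one, mul_zero]
      have hFp0 : (∑' x : X, ENNReal.ofReal (f x)) = 0 := by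
        apply ENNReal.tsum_eq_zero.mpr
        intro x
        rw [hf0 x]
        simp
      have hFm0 : (∑' x : X, ENNReal.ofReal (-(f x))) = 0 := by
        apply ENNReal.tsum_eq_zero.mpr
        intro x
        rw [hf0 x]
        simp
      have := star
      rw [hFp0, hFm0, add_zero, zero_add] at this
      rw [E2, E1, E3, ← this]
      ring
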